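/- The supremum over all n ∈ ℕ of Φⁿ(0)(false, 0), where 0 is the constant-zero function, equals ENNReal.ofReal(π²/12 − 1/2). (This is the weakest preexpectation wp[C](1) = π²/12 − 1/2 of the constant function 1 for the paper's example program, obtained as the supremum of the fixpoint iterates.) -/

import Mathlib

open scoped ENNReal

/-- The weakest-(liberal-)preexpectation characteristic functional of the paper's example
loop: with counter `k`, the loop body terminates with probability `1/(k+2)²` while
issuing score `(k+1)/(k+2)`, and otherwise increments `k` and repeats. -/
noncomputable def Phi (X : Bool × ℕ → ℝ≥0∞) : Bool × ℕ → ℝ≥0∞ := fun p =>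
  match p with
  | (true, _) => 1
  | (false, k) =>
      (((k : ℝ≥0∞) + 1) / ((k : ℝ≥0∞) + 2) ^ 3) * X (true, k + 1) +
        ((((k : ℝ≥0∞) + 2) ^ 2 - 1) / ((k : ℝ≥0∞) + 2) ^ 2) * X (false, k + 1)

lemma div_mul_div' (a b c d : ℝ≥0∞) (hb : b ≠ 0) (hb' : b ≠ ∞) :
    a / b * (c / d) = a * c / (b * d) := by
  rw [div_eq_mul_inv, div_eq_mul_inv, div_eq_mul_inv, ENNReal.mul_inv (Or.inl hb) (Or.inl hb')]
  ring

lemma cancel (a b c d : ℝ≥0∞) (hb0 : b ≠ 0) (hbt : b ≠ ∞) (hc0 : c ≠ 0) (hct : c ≠ ∞) :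
    a * c / b ^ 2 * (b / (c * d)) = a / (b * d) := by
  rw [div_mul_div' _ _ _ _ (pow_ne_zero 2 hb0) (ENNReal.pow_ne_top hbt)]
  have e1 : a * c * b = b * c * a := by ring
  have e2 : b ^ 2 * (c * d) = b * c * (b * d) := by ring
  rw [e1, e2, ENNReal.mul_div_mul_left _ _ (mul_ne_zero hb0 hc0) (ENNReal.mul_ne_top hbt hct)]

lemma phi_true (n : ℕ) (k : ℕ) : Phi^[n+1] 0 (true, k) = 1 := by
  rw [Function.iterate_succ_apply']; rfl

lemma sub_fact (k : ℕ) :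
    ((k : ℝ≥0∞) + 2) ^ 2 - 1 = ((k : ℝ≥0∞) + 1) * ((k : ℝ≥0∞) + 3) := by
  have h : ((k : ℝ≥0∞) + 2) ^ 2 = ((k : ℝ≥0∞) + 1) * ((k : ℝ≥0∞) + 3) + 1 := by ring
  rw [h, ENNReal.add_sub_cancel_right ENNReal.one_ne_top]

lemma phi_closed (n : ℕ) : ∀ k : ℕ, Phi^[n+1] 0 (false, k) =
    ∑ j ∈ Finset.range n, ((k : ℝ≥0∞) + 1) / (((k : ℝ≥0∞) + 2) * ((k : ℝ≥0∞) + j + 2) ^ 2) := by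
  induction n with
  | zero => intro k; simp [Phi]
  | succ n ih =>
    intro k
    have hK0 : (k : ℝ≥0∞) + 2 ≠ 0 := by simp
    have hKt : (k : ℝ≥0∞) + 2 ≠ ∞ := ENNReal.add_ne_top.2 ⟨ENNReal.natCast_ne_top k, ENNReal.ofNat_ne_top⟩
    have hK30 : (k : ℝ≥0∞) + 3 ≠ 0 := by simp
    have hK3t : (k : ℝ≥0∞) + 3 ≠ ∞ := ENNReal.add_ne_top.2 ⟨ENNReal.natCast_ne_top k, by simp⟩
    rw [Function.iterate_succ_apply']
    show (((k : ℝ≥0∞) + 1) / ((k : ℝ≥0∞) + 2) ^ 3) * Phi^[n+1] 0 (true, k + 1) +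
        ((((k : ℝ≥0∞) + 2) ^ 2 - 1) / ((k : ℝ≥0∞) + 2) ^ 2) * Phi^[n+1] 0 (false, k + 1) = _
    rw [phi_true n (k+1), ih (k+1), mul_one, Finset.mul_sum, sub_fact,
      Finset.sum_range_succ', add_comm (((k : ℝ≥0∞) + 1) / ((k : ℝ≥0∞) + 2) ^ 3)]
    congr 1
    · refine Finset.sum_congr rfl fun j _ => ?_
      have e1 : ((k+1:ℕ) : ℝ≥0∞) + 1 = (k : ℝ≥0∞) + 2 := by push_cast; ring
      have e2 : ((k+1:ℕ) : ℝ≥0∞) + 2 = (k : ℝ≥0∞) + 3 := by push_cast; ring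
      have e3 : (((k+1:ℕ) : ℝ≥0∞) + 2) * (((k+1:ℕ) : ℝ≥0∞) + j + 2) ^ 2 =
          ((k : ℝ≥0∞) + 3) * ((((k+1:ℕ) : ℝ≥0∞) + j + 2) ^ 2) := by rw [e2]
      rw [e3, e1, cancel _ _ _ _ hK0 hKt hK30 hK3t]
      congr 1
      push_cast; ring
    · congr 1
      push_cast; ring
lemma real_tsum : HasSum (fun j : ℕ => 1 / (2 * ((j : ℝ) + 2) ^ 2)) (Real.pi ^ 2 / 12 - 1 / 2) := by
  have h0 := hasSum_zeta_two
  have h1 : HasSum (fun n : ℕ => (1 : ℝ) / ((n + 2 : ℕ) : ℝ) ^ 2)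
      (Real.pi ^ 2 / 6 - ∑ i ∈ Finset.range 2, (1 : ℝ) / (i : ℝ) ^ 2) :=
    (hasSum_nat_add_iff' 2).2 h0
  have h2 : ∑ i ∈ Finset.range 2, (1 : ℝ) / (i : ℝ) ^ 2 = 1 := by
    simp [Finset.sum_range_succ]
  rw [h2] at h1
  have h3 := h1.div_const 2
  have hv : (Real.pi ^ 2 / 6 - 1) / 2 = Real.pi ^ 2 / 12 - 1 / 2 := by ring
  rw [hv] at h3
  convert h3 using 1
  rotate_left
  funext j
  have hj : ((j : ℝ) + 2) ≠ 0 := by positivity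
  push_cast
  field_simp
  rfl

lemma term_eq (j : ℕ) :
    (1 : ℝ≥0∞) / (2 * ((j : ℝ≥0∞) + 2) ^ 2) = ENNReal.ofReal (1 / (2 * ((j : ℝ) + 2) ^ 2)) := by
  rw [ENNReal.ofReal_div_of_pos (by positivity), ENNReal.ofReal_one,
    ENNReal.ofReal_mul (by norm_num), ENNReal.ofReal_pow (by positivity),
    ENNReal.ofReal_add (by positivity) (by norm_num), ENNReal.ofReal_natCast]
  norm_num

lemma summable_f : Summable (fun j : ℕ => 1 / (2 * ((j : ℝ) + 2) ^ 2)) := real_tsum.summable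


/-- The weakest preexpectation `wp[C](1) = π²/12 − 1/2` of the example program, as the
supremum of the fixpoint iterates `Φⁿ(0)` evaluated at the initial state `(false, 0)`. -/
theorem phi_iterate_zero_sup :
    ⨆ n : ℕ, Phi^[n] 0 (false, 0) = ENNReal.ofReal (Real.pi ^ 2 / 12 - 1 / 2) := by
  set g : ℕ → ℝ≥0∞ := fun j => 1 / (2 * ((j : ℝ≥0∞) + 2) ^ 2) with hg
  have hclosed : ∀ n : ℕ, Phi^[n+1] 0 (false, 0) = ∑ j ∈ Finset.range n, g j := by
    intro n
    rw [phi_closed n 0]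
    refine Finset.sum_congr rfl fun j _ => ?_
    simp only [hg]
    congr 1
    · norm_num
    · push_cast; ring
  have hsup : ⨆ n : ℕ, Phi^[n] 0 (false, 0) = ⨆ n : ℕ, ∑ j ∈ Finset.range n, g j := by
    apply le_antisymm
    · refine iSup_le fun n => ?_
      cases n with
      | zero => simp
      | succ m => rw [hclosed m]; exact le_iSup (fun n => ∑ j ∈ Finset.range n, g j) m
    · refine iSup_le fun n => ?_
      rw [← hclosed n]
      exact le_iSup (fun n => Phi^[n] 0 (false, 0)) (n+1)
  rw [hsup, ← ENNReal.tsum_eq_iSup_sum' (fun n => Finset.range n) Finset.exists_nat_subset_range]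
  calc ∑' j, g j = ∑' j : ℕ, ENNReal.ofReal (1 / (2 * ((j : ℝ) + 2) ^ 2)) := by
        exact tsum_congr term_eq
    _ = ENNReal.ofReal (∑' j : ℕ, 1 / (2 * ((j : ℝ) + 2) ^ 2)) :=
        (ENNReal.ofReal_tsum_of_nonneg (fun j => by positivity) summable_f).symm
    _ = ENNReal.ofReal (Real.pi ^ 2 / 12 - 1 / 2) := by rw [real_tsum.tsum_eq]
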